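/- The optimized pick-l program upper bounds α_k: the optimal value of maximizing ∑_L γ_L α_L over coefficients γ_L ≥ 0 indexed by l-subsets L, subject to ∑_L γ_L ≤ k/l and, for every b with 1 ≤ b ≤ l and every b-set B, ∑_{L ⊇ B} γ_L ≤ C(k−b,l−b)/C(k−1,l−1), is at least α_k. -/

import Mathlib

open Finset

variable {α : Type*} [DecidableEq α]

lemma card_subsets_containing (K B : Finset α) (hB : B ⊆ K) {l : ℕ} (hbl : B.card ≤ l) :
    ((K.powersetCard l).filter (fun L => B ⊆ L)).card = (K.card - B.card).choose (l - B.card) := by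
  rw [← card_sdiff_of_subset hB, ← card_powersetCard (l - B.card) (K \ B)]
  apply card_bij' (fun L _ => L \ B) (fun S _ => S ∪ B)
  · intro L hL
    simp only [mem_filter, mem_powersetCard] at hL
    simp only [mem_powersetCard]
    exact ⟨sdiff_subset_sdiff hL.1.1 le_rfl, by rw [card_sdiff_of_subset hL.2, hL.1.2]⟩
  · intro S hS
    simp only [mem_powersetCard] at hS
    have hdisj : Disjoint S B := disjoint_of_subset_left hS.1 sdiff_disjoint
    simp only [mem_filter, mem_powersetCard]
    refine ⟨⟨union_subset (hS.1.trans (sdiff_subset)) hB, ?_⟩, subset_union_right⟩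
    rw [card_union_of_disjoint hdisj, hS.2]
    omega
  · intro L hL
    simp only [mem_filter] at hL
    exact sdiff_union_of_subset hL.2
  · intro S hS
    simp only [mem_powersetCard] at hS
    have hdisj : Disjoint S B := disjoint_of_subset_left hS.1 sdiff_disjoint
    exact union_sdiff_cancel_right hdisj

lemma sum_sum_powersetCard (K : Finset α) {l : ℕ} (hl : 1 ≤ l) (f : α → ℝ) :
    ∑ L ∈ K.powersetCard l, ∑ i ∈ L, f i
      = ((K.card - 1).choose (l - 1) : ℝ) * ∑ i ∈ K, f i := by
  have h1 : ∀ L ∈ K.powersetCard l, ∑ i ∈ L, f i = ∑ i ∈ K, if i ∈ L then f i else 0 := by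
    intro L hL
    rw [mem_powersetCard] at hL
    rw [sum_ite_mem, inter_eq_right.mpr hL.1]
  rw [sum_congr rfl h1, sum_comm, mul_sum]
  apply sum_congr rfl
  intro i hi
  rw [Finset.sum_filter (s := K.powersetCard l) (p := fun L => i ∈ L) (fun _ => f i) |>.symm]
  have : (K.powersetCard l).filter (fun L => i ∈ L)
      = (K.powersetCard l).filter (fun L => {i} ⊆ L) := by
    apply filter_congr; intro L _; simp
  rw [this, sum_const, card_subsets_containing K {i} (singleton_subset_iff.mpr hi)
    (by simpa using hl)]
  simp [card_singleton, nsmul_eq_mul]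

lemma filter_subset_powersetCard [Fintype α] (K : Finset α) (l : ℕ) :
    ((Finset.univ : Finset α).powersetCard l).filter (fun L => L ⊆ K) = K.powersetCard l := by
  ext L; simp [mem_powersetCard, and_comm]

noncomputable def alphaS {m n : ℕ} (A : Matrix (Fin m) (Fin n) ℝ) (S : Finset (Fin n)) : ℝ :=
  sSup {r : ℝ | ∃ z : Fin n → ℝ, A.mulVec z = 0 ∧ z ≠ 0 ∧
    r = (∑ i ∈ S, |z i|) / (∑ i, |z i|)}

noncomputable def alphaKexact {m n : ℕ} (A : Matrix (Fin m) (Fin n) ℝ) (k : ℕ) : ℝ :=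
  sSup {r : ℝ | ∃ K : Finset (Fin n), K.card = k ∧ r = alphaS A K}

lemma sum_abs_pos {n : ℕ} {z : Fin n → ℝ} (hz : z ≠ 0) : 0 < ∑ i, |z i| := by
  obtain ⟨j, hj⟩ := Function.ne_iff.mp hz
  exact Finset.sum_pos' (fun i _ => abs_nonneg _) ⟨j, mem_univ j, abs_pos.mpr hj⟩

lemma ratio_le_one {m n : ℕ} (A : Matrix (Fin m) (Fin n) ℝ) (S : Finset (Fin n))
    {r : ℝ} (hr : r ∈ {r : ℝ | ∃ z : Fin n → ℝ, A.mulVec z = 0 ∧ z ≠ 0 ∧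
      r = (∑ i ∈ S, |z i|) / (∑ i, |z i|)}) : r ≤ 1 := by
  obtain ⟨z, _, hz, rfl⟩ := hr
  rw [div_le_one (sum_abs_pos hz)]
  exact sum_le_sum_of_subset_of_nonneg (subset_univ S) (fun i _ _ => abs_nonneg _)

lemma alphaS_le_one {m n : ℕ} (A : Matrix (Fin m) (Fin n) ℝ) (S : Finset (Fin n)) :
    alphaS A S ≤ 1 :=
  Real.sSup_le (fun _ hr => ratio_le_one A S hr) zero_le_one

lemma alphaS_bddAbove {m n : ℕ} (A : Matrix (Fin m) (Fin n) ℝ) (S : Finset (Fin n)) :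
    BddAbove {r : ℝ | ∃ z : Fin n → ℝ, A.mulVec z = 0 ∧ z ≠ 0 ∧
      r = (∑ i ∈ S, |z i|) / (∑ i, |z i|)} :=
  ⟨1, fun _ hr => ratio_le_one A S hr⟩

theorem stmt_12 {m n k l : ℕ} (A : Matrix (Fin m) (Fin n) ℝ)
    (hN : ∃ z : Fin n → ℝ, A.mulVec z = 0 ∧ z ≠ 0)
    (hl : 1 ≤ l) (hlk : l ≤ k) (hkn : k ≤ n) :
    alphaKexact A k ≤
      sSup {v : ℝ | ∃ γ : Finset (Fin n) → ℝ,
        (∀ L, 0 ≤ γ L) ∧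
        (∑ L ∈ (Finset.univ : Finset (Fin n)).powersetCard l, γ L ≤ (k : ℝ) / (l : ℝ)) ∧
        (∀ b : ℕ, ∀ B : Finset (Fin n), 1 ≤ b → b ≤ l → B.card = b →
          ∑ L ∈ ((Finset.univ : Finset (Fin n)).powersetCard l).filter (fun L => B ⊆ L),
            γ L ≤ ((k - b).choose (l - b) : ℝ) / ((k - 1).choose (l - 1) : ℝ)) ∧
        v = ∑ L ∈ (Finset.univ : Finset (Fin n)).powersetCard l, γ L * alphaS A L} := by
  set LP := {v : ℝ | ∃ γ : Finset (Fin n) → ℝ,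
        (∀ L, 0 ≤ γ L) ∧
        (∑ L ∈ (Finset.univ : Finset (Fin n)).powersetCard l, γ L ≤ (k : ℝ) / (l : ℝ)) ∧
        (∀ b : ℕ, ∀ B : Finset (Fin n), 1 ≤ b → b ≤ l → B.card = b →
          ∑ L ∈ ((Finset.univ : Finset (Fin n)).powersetCard l).filter (fun L => B ⊆ L),
            γ L ≤ ((k - b).choose (l - b) : ℝ) / ((k - 1).choose (l - 1) : ℝ)) ∧
        v = ∑ L ∈ (Finset.univ : Finset (Fin n)).powersetCard l, γ L * alphaS A L} with hLP
  -- LP is bounded above by k/l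
  have hbdd : BddAbove LP := by
    refine ⟨(k : ℝ) / l, fun v hv => ?_⟩
    obtain ⟨γ, hγ0, hγsum, _, rfl⟩ := hv
    calc ∑ L ∈ (Finset.univ : Finset (Fin n)).powersetCard l, γ L * alphaS A L
        ≤ ∑ L ∈ (Finset.univ : Finset (Fin n)).powersetCard l, γ L := by
          apply sum_le_sum
          intro L _
          calc γ L * alphaS A L ≤ γ L * 1 :=
                mul_le_mul_of_nonneg_left (alphaS_le_one A L) (hγ0 L)
            _ = γ L := mul_one _
      _ ≤ (k : ℝ) / l := hγsum
  -- LP contains 0 (take γ = 0)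
  have h0 : (0 : ℝ) ∈ LP := by
    refine ⟨fun _ => 0, fun _ => le_rfl, by simp [Nat.div_le_iff_le_mul_add_pred]; positivity,
      fun b B _ _ _ => by simp; positivity, by simp⟩
  have hLP0 : (0 : ℝ) ≤ sSup LP := le_csSup hbdd h0
  apply Real.sSup_le _ hLP0
  rintro r ⟨K, hK, rfl⟩
  apply Real.sSup_le _ hLP0
  rintro x ⟨z, hAz, hz, rfl⟩
  -- key positivity
  have hD : 0 < ((k - 1).choose (l - 1) : ℕ) := Nat.choose_pos (by omega)
  have hDR : (0 : ℝ) < ((k - 1).choose (l - 1) : ℕ) := by exact_mod_cast hD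
  set c : ℝ := 1 / ((k - 1).choose (l - 1) : ℕ) with hc
  have hc0 : 0 ≤ c := by positivity
  set γ : Finset (Fin n) → ℝ := fun L => if L ⊆ K ∧ L.card = l then c else 0 with hγ
  have hsum_eq : ∀ f : Finset (Fin n) → ℝ,
      ∑ L ∈ (Finset.univ : Finset (Fin n)).powersetCard l, γ L * f L
        = ∑ L ∈ K.powersetCard l, c * f L := by
    intro f
    rw [← filter_subset_powersetCard K l, sum_filter]
    apply sum_congr rfl
    intro L hL
    rw [mem_powersetCard] at hL
    by_cases hsub : L ⊆ K <;> simp [hγ, hsub, hL.2]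
  have hsum_eq' : ∑ L ∈ (Finset.univ : Finset (Fin n)).powersetCard l, γ L
      = (k.choose l : ℝ) * c := by
    have := hsum_eq (fun _ => 1)
    simpa [← hK, card_powersetCard, mul_comm] using this
  refine le_trans ?_ (le_csSup hbdd (Set.mem_setOf.mpr ⟨γ, ?_, ?_, ?_, rfl⟩))
  · -- x ≤ value
    rw [hsum_eq]
    have hzpos := sum_abs_pos hz
    have hstep : ∀ L ∈ K.powersetCard l,
        c * ((∑ i ∈ L, |z i|) / (∑ i, |z i|)) ≤ c * alphaS A L := by
      intro L _
      apply mul_le_mul_of_nonneg_left _ hc0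
      exact le_csSup (alphaS_bddAbove A L) ⟨z, hAz, hz, rfl⟩
    calc (∑ i ∈ K, |z i|) / (∑ i, |z i|)
        = ∑ L ∈ K.powersetCard l, c * ((∑ i ∈ L, |z i|) / (∑ i, |z i|)) := by
          rw [← mul_sum, ← sum_div, sum_sum_powersetCard K hl, hK]
          field_simp [hc]
          rw [hc, mul_assoc, one_div_mul_cancel hDR.ne', mul_one]
      _ ≤ ∑ L ∈ K.powersetCard l, c * alphaS A L := sum_le_sum hstep
  · intro L; by_cases h : L ⊆ K ∧ L.card = l <;> simp [hγ, h, hc0]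
  · -- total mass constraint
    rw [hsum_eq']
    have hid : k.choose l * l = k * (k - 1).choose (l - 1) := by
      have := Nat.add_one_mul_choose_eq (k - 1) (l - 1)
      have h1 : k - 1 + 1 = k := by omega
      have h2 : l - 1 + 1 = l := by omega
      rw [h1, h2] at this
      omega
    have hl0 : (0 : ℝ) < l := by exact_mod_cast hl
    rw [hc, mul_one_div, div_le_div_iff₀ hDR hl0]
    exact_mod_cast hid.le
  · -- covering constraints
    intro b B hb hbl hB
    have hsum : ∑ L ∈ ((Finset.univ : Finset (Fin n)).powersetCard l).filter (fun L => B ⊆ L), γ L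
        = (((K.powersetCard l).filter (fun L => B ⊆ L)).card : ℝ) * c := by
      rw [sum_filter]
      have : ∀ L ∈ (Finset.univ : Finset (Fin n)).powersetCard l,
          (if B ⊆ L then γ L else 0) = if B ⊆ L ∧ L ⊆ K then c else 0 := by
        intro L hL
        rw [mem_powersetCard] at hL
        by_cases h1 : B ⊆ L <;> by_cases h2 : L ⊆ K <;> simp [hγ, h1, h2, hL.2]
      rw [sum_congr rfl this, ← sum_filter, ← filter_filter, filter_comm,
        filter_subset_powersetCard, sum_const, nsmul_eq_mul]
    rw [hsum]
    have hcard : (((K.powersetCard l).filter (fun L => B ⊆ L)).card : ℕ)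
        ≤ (k - b).choose (l - b) := by
      by_cases hBK : B ⊆ K
      · rw [card_subsets_containing K B hBK (hB ▸ hbl), hK, hB]
      · have : ((K.powersetCard l).filter (fun L => B ⊆ L)) = ∅ := by
          apply filter_false_of_mem
          intro L hL hBL
          rw [mem_powersetCard] at hL
          exact hBK (hBL.trans hL.1)
        rw [this]; simp
    rw [hc, mul_one_div, div_le_div_iff₀ hDR hDR]
    have : (((K.powersetCard l).filter (fun L => B ⊆ L)).card : ℝ) ≤ ((k - b).choose (l - b) : ℝ) := by
      exact_mod_cast hcard
    nlinarith [hDR]
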